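/- Let α ∈ (0,1). Then there exists a constant C > 0 such that for every a ∈ ℝ \ {0}: ∫₀¹ s^{α−1} |a + log(1−s)|^{−α} ds ≤ C |a|^{−α} and ∫₀¹ s^{α−1} |a + log(1+s)|^{−α} ds ≤ C |a|^{−α}. -/

import Mathlib

noncomputable section

open MeasureTheory

open Real Set


private lemma lintegral_image_1d {s : Set ℝ} {f f' : ℝ → ℝ} (hs : MeasurableSet s)
    (hf' : ∀ x ∈ s, HasDerivWithinAt f (f' x) s x) (hf : Set.InjOn f s) (g : ℝ → ENNReal) :
    ∫⁻ x in f '' s, g x = ∫⁻ x in s, ENNReal.ofReal |f' x| * g (f x) := by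
  simpa only [ContinuousLinearMap.det_toSpanSingleton] using
    lintegral_image_eq_lintegral_abs_det_fderiv_mul volume hs
      (fun x hx => (hf' x hx).hasFDerivWithinAt) hf g

-- ∫⁻ over Ioc c d of (u-c)^(-α)
private lemma side_right {α : ℝ} (hα : α ∈ Set.Ioo (0:ℝ) 1) {c d : ℝ} (hcd : c ≤ d) :
    ∫⁻ u in Ioc c d, ENNReal.ofReal ((u - c) ^ (-α)) ≤
      ENNReal.ofReal ((d - c) ^ (1 - α) / (1 - α)) := by
  obtain ⟨hα0, hα1⟩ := hα
  have hii : IntervalIntegrable (fun u : ℝ => (u - c) ^ (-α)) volume c d := by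
    simpa using (intervalIntegral.intervalIntegrable_rpow' (a := c - c) (b := d - c)
      (r := -α) (by linarith)).comp_sub_right c
  have hint : IntegrableOn (fun u : ℝ => (u - c) ^ (-α)) (Ioc c d) :=
    (intervalIntegrable_iff_integrableOn_Ioc_of_le hcd).mp hii
  have hnn : 0 ≤ᶠ[ae (volume.restrict (Ioc c d))] fun u : ℝ => (u - c) ^ (-α) := by
    refine (ae_restrict_iff' measurableSet_Ioc).2 (ae_of_all _ fun u hu => ?_)
    exact rpow_nonneg (by linarith [hu.1]) _
  have hval : ∫ u in Ioc c d, (u - c) ^ (-α) = (d - c) ^ (1 - α) / (1 - α) := by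
    rw [← intervalIntegral.integral_of_le hcd]
    rw [show (fun u : ℝ => (u - c) ^ (-α)) = fun u : ℝ => (fun v : ℝ => v ^ (-α)) (u - c) from rfl]
    rw [intervalIntegral.integral_comp_sub_right (fun v : ℝ => v ^ (-α)) c]
    rw [integral_rpow (Or.inl (by linarith))]
    rw [sub_self, Real.zero_rpow (by linarith), show -α + 1 = 1 - α by ring]
    norm_num
  rw [← ofReal_integral_eq_lintegral_ofReal hint hnn, hval]

private lemma side_left {α : ℝ} (hα : α ∈ Set.Ioo (0:ℝ) 1) {c d : ℝ} (hcd : c ≤ d) :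
    ∫⁻ u in Ioc c d, ENNReal.ofReal ((d - u) ^ (-α)) ≤
      ENNReal.ofReal ((d - c) ^ (1 - α) / (1 - α)) := by
  obtain ⟨hα0, hα1⟩ := hα
  have hii0 : IntervalIntegrable (fun v : ℝ => v ^ (-α)) volume (d - d) (d - c) :=
    intervalIntegral.intervalIntegrable_rpow' (by linarith)
  have hii : IntervalIntegrable (fun u : ℝ => (d - u) ^ (-α)) volume c d := by
    have := (hii0.comp_sub_left d).symm
    simpa using this
  have hint : IntegrableOn (fun u : ℝ => (d - u) ^ (-α)) (Ioc c d) :=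
    (intervalIntegrable_iff_integrableOn_Ioc_of_le hcd).mp hii
  have hnn : 0 ≤ᶠ[ae (volume.restrict (Ioc c d))] fun u : ℝ => (d - u) ^ (-α) := by
    refine (ae_restrict_iff' measurableSet_Ioc).2 (ae_of_all _ fun u hu => ?_)
    exact rpow_nonneg (by linarith [hu.2]) _
  have hval : ∫ u in Ioc c d, (d - u) ^ (-α) = (d - c) ^ (1 - α) / (1 - α) := by
    rw [← intervalIntegral.integral_of_le hcd]
    rw [show (fun u : ℝ => (d - u) ^ (-α)) = fun u : ℝ => (fun v : ℝ => v ^ (-α)) (d - u) from rfl]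
    rw [intervalIntegral.integral_comp_sub_left (fun v : ℝ => v ^ (-α)) d]
    rw [integral_rpow (Or.inl (by linarith))]
    rw [sub_self, Real.zero_rpow (by linarith), show -α + 1 = 1 - α by ring]
    norm_num
  rw [← ofReal_integral_eq_lintegral_ofReal hint hnn, hval]

private lemma gamma_lem {α : ℝ} (hα : α ∈ Set.Ioo (0:ℝ) 1) :
    ∫⁻ u in Ioi (0:ℝ), ENNReal.ofReal (u ^ (α - 1) * Real.exp (-(α * u))) =
      ENNReal.ofReal ((1 / α) ^ α * Real.Gamma α) := by
  obtain ⟨hα0, hα1⟩ := hα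
  have hint : IntegrableOn (fun u : ℝ => u ^ (α - 1) * Real.exp (-(α * u))) (Ioi 0) := by
    have := integrableOn_rpow_mul_exp_neg_mul_rpow (p := 1) (s := α - 1) (b := α)
      (by linarith) zero_lt_one hα0
    simpa [Real.rpow_one, neg_mul] using this
  have hnn : 0 ≤ᶠ[ae (volume.restrict (Ioi (0:ℝ)))]
      fun u : ℝ => u ^ (α - 1) * Real.exp (-(α * u)) := by
    refine (ae_restrict_iff' measurableSet_Ioi).2 (ae_of_all _ fun u hu => ?_)
    exact mul_nonneg (rpow_nonneg (le_of_lt hu) _) (Real.exp_pos _).le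
  rw [← ofReal_integral_eq_lintegral_ofReal hint hnn,
    Real.integral_rpow_mul_exp_neg_mul_Ioi hα0 hα0]

private lemma abs_lem {α : ℝ} (hα : α ∈ Set.Ioo (0:ℝ) 1) {a : ℝ} (ha : 0 < a) :
    ∫⁻ u in Ioo (a / 2) (2 * a), ENNReal.ofReal (|a - u| ^ (-α)) ≤
      ENNReal.ofReal (2 * a ^ (1 - α) / (1 - α)) := by
  obtain ⟨hα0, hα1⟩ := hα
  have hsub : Ioo (a / 2) (2 * a) ⊆ Ioc 0 a ∪ Ioc a (2 * a) := by
    intro u hu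
    rcases le_or_gt u a with h | h
    · exact Or.inl ⟨by linarith [hu.1], h⟩
    · exact Or.inr ⟨h, hu.2.le⟩
  calc ∫⁻ u in Ioo (a / 2) (2 * a), ENNReal.ofReal (|a - u| ^ (-α))
      ≤ ∫⁻ u in Ioc 0 a ∪ Ioc a (2 * a), ENNReal.ofReal (|a - u| ^ (-α)) :=
        lintegral_mono_set hsub
    _ ≤ (∫⁻ u in Ioc 0 a, ENNReal.ofReal (|a - u| ^ (-α)))
        + ∫⁻ u in Ioc a (2 * a), ENNReal.ofReal (|a - u| ^ (-α)) :=
        lintegral_union_le _ _ _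
    _ ≤ ENNReal.ofReal (a ^ (1 - α) / (1 - α)) + ENNReal.ofReal (a ^ (1 - α) / (1 - α)) := by
        gcongr ?_ + ?_
        · have h1 : ∫⁻ u in Ioc 0 a, ENNReal.ofReal (|a - u| ^ (-α))
              = ∫⁻ u in Ioc 0 a, ENNReal.ofReal ((a - u) ^ (-α)) := by
            refine setLIntegral_congr_fun measurableSet_Ioc (fun u hu => ?_)
            rw [abs_of_nonneg (by linarith [hu.2] : (0:ℝ) ≤ a - u)]
          rw [h1]
          simpa using side_left ⟨hα0, hα1⟩ (le_of_lt ha)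
        · have h1 : ∫⁻ u in Ioc a (2 * a), ENNReal.ofReal (|a - u| ^ (-α))
              = ∫⁻ u in Ioc a (2 * a), ENNReal.ofReal ((u - a) ^ (-α)) := by
            refine setLIntegral_congr_fun measurableSet_Ioc (fun u hu => ?_)
            rw [abs_of_nonpos (by linarith [hu.1] : a - u ≤ 0), neg_sub]
          rw [h1]
          calc ∫⁻ u in Ioc a (2 * a), ENNReal.ofReal ((u - a) ^ (-α))
              ≤ ENNReal.ofReal ((2 * a - a) ^ (1 - α) / (1 - α)) :=
                side_right ⟨hα0, hα1⟩ (by linarith)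
            _ = ENNReal.ofReal (a ^ (1 - α) / (1 - α)) := by ring_nf
    _ = ENNReal.ofReal (2 * a ^ (1 - α) / (1 - α)) := by
        rw [← ENNReal.ofReal_add (div_nonneg (rpow_nonneg ha.le _) (by linarith)) (div_nonneg (rpow_nonneg ha.le _) (by linarith))]
        ring_nf

private lemma piece_lem {α : ℝ} (hα : α ∈ Set.Ioo (0:ℝ) 1) {a b : ℝ} (hb : 0 < b)
    {s : Set ℝ} (hs : MeasurableSet s) (hsub : s ⊆ Ioi 0)
    (hbd : ∀ u ∈ s, b ≤ |a - u|) :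
    ∫⁻ u in s, ENNReal.ofReal (u ^ (α - 1) * Real.exp (-(α * u)) * |a - u| ^ (-α))
      ≤ ENNReal.ofReal ((1 / α) ^ α * Real.Gamma α * b ^ (-α)) := by
  obtain ⟨hα0, hα1⟩ := hα
  calc ∫⁻ u in s, ENNReal.ofReal (u ^ (α - 1) * Real.exp (-(α * u)) * |a - u| ^ (-α))
      ≤ ∫⁻ u in s, ENNReal.ofReal (u ^ (α - 1) * Real.exp (-(α * u)))
          * ENNReal.ofReal (b ^ (-α)) := by
        refine setLIntegral_mono' hs fun u hu => ?_
        have hnn : 0 ≤ u ^ (α - 1) * Real.exp (-(α * u)) :=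
          mul_nonneg (rpow_nonneg (le_of_lt (hsub hu)) _) (Real.exp_pos _).le
        rw [← ENNReal.ofReal_mul hnn]
        exact ENNReal.ofReal_le_ofReal
          (mul_le_mul_of_nonneg_left
            (rpow_le_rpow_of_nonpos hb (hbd u hu) (by linarith)) hnn)
    _ = (∫⁻ u in s, ENNReal.ofReal (u ^ (α - 1) * Real.exp (-(α * u))))
          * ENNReal.ofReal (b ^ (-α)) :=
        lintegral_mul_const' _ _ ENNReal.ofReal_ne_top
    _ ≤ ENNReal.ofReal ((1 / α) ^ α * Real.Gamma α) * ENNReal.ofReal (b ^ (-α)) := by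
        gcongr
        rw [← gamma_lem ⟨hα0, hα1⟩]
        exact lintegral_mono_set hsub
    _ = ENNReal.ofReal ((1 / α) ^ α * Real.Gamma α * b ^ (-α)) := by
        rw [← ENNReal.ofReal_mul (by positivity)]

private lemma master {α : ℝ} (hα : α ∈ Set.Ioo (0:ℝ) 1) :
    ∃ Cm > (0:ℝ), ∀ a : ℝ, a ≠ 0 →
      ∫⁻ u in Ioi (0:ℝ), ENNReal.ofReal (u ^ (α - 1) * Real.exp (-(α * u)) * |a - u| ^ (-α))
        ≤ ENNReal.ofReal (Cm * |a| ^ (-α)) := by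
  obtain ⟨hα0, hα1⟩ := hα
  set G : ℝ := (1 / α) ^ α * Real.Gamma α with hGdef
  have hG : 0 < G := by
    have := Real.Gamma_pos_of_pos hα0
    positivity
  have h1α : (0:ℝ) < 1 - α := by linarith
  have h2α : (0:ℝ) < 2 ^ α := rpow_pos_of_pos (by norm_num) _
  refine ⟨2 ^ α * G + G + 4 / (1 - α), by positivity, fun a ha => ?_⟩
  rcases lt_or_gt_of_ne ha with hneg | hpos
  · -- a < 0
    have habs : |a| = -a := abs_of_neg hneg
    have hbd : ∀ u ∈ Ioi (0:ℝ), |a| ≤ |a - u| := by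
      intro u hu
      rw [habs, abs_of_neg (by simp only [mem_Ioi] at hu; linarith : a - u < 0)]
      simp only [mem_Ioi] at hu
      linarith
    calc ∫⁻ u in Ioi (0:ℝ), ENNReal.ofReal (u ^ (α - 1) * Real.exp (-(α * u)) * |a - u| ^ (-α))
        ≤ ENNReal.ofReal (G * |a| ^ (-α)) :=
          piece_lem ⟨hα0, hα1⟩ (abs_pos.mpr ha) measurableSet_Ioi (fun _ h => h) hbd
      _ ≤ ENNReal.ofReal ((2 ^ α * G + G + 4 / (1 - α)) * |a| ^ (-α)) := by
          refine ENNReal.ofReal_le_ofReal ?_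
          refine mul_le_mul_of_nonneg_right ?_ (rpow_nonneg (abs_nonneg a) _)
          nlinarith [mul_pos h2α hG, div_pos (show (0:ℝ) < 4 by norm_num) h1α]
  · -- a > 0
    have ha2 : 0 < a / 2 := by linarith
    have habs : |a| = a := abs_of_pos hpos
    have hsubset : Ioi (0:ℝ) ⊆ Ioc 0 (a/2) ∪ (Ioo (a/2) (2*a) ∪ Ici (2*a)) := by
      intro u hu
      simp only [mem_Ioi] at hu
      rcases le_or_gt u (a/2) with h1 | h1
      · exact Or.inl ⟨hu, h1⟩
      rcases lt_or_ge u (2*a) with h2 | h2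
      · exact Or.inr (Or.inl ⟨h1, h2⟩)
      · exact Or.inr (Or.inr h2)
    have hA : ∫⁻ u in Ioc (0:ℝ) (a/2),
        ENNReal.ofReal (u ^ (α - 1) * Real.exp (-(α * u)) * |a - u| ^ (-α))
        ≤ ENNReal.ofReal (G * (a/2) ^ (-α)) := by
      refine piece_lem ⟨hα0, hα1⟩ ha2 measurableSet_Ioc (fun u hu => hu.1) ?_
      intro u hu
      rw [abs_of_nonneg (by linarith [hu.2] : (0:ℝ) ≤ a - u)]
      linarith [hu.2]
    have hC : ∫⁻ u in Ici (2*a),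
        ENNReal.ofReal (u ^ (α - 1) * Real.exp (-(α * u)) * |a - u| ^ (-α))
        ≤ ENNReal.ofReal (G * a ^ (-α)) := by
      refine piece_lem ⟨hα0, hα1⟩ hpos measurableSet_Ici (fun u hu => ?_) ?_
      · simp only [mem_Ici] at hu; simp only [mem_Ioi]; linarith
      · intro u hu
        simp only [mem_Ici] at hu
        rw [abs_of_nonpos (by linarith : a - u ≤ 0)]
        linarith
    have hB : ∫⁻ u in Ioo (a/2) (2*a),
        ENNReal.ofReal (u ^ (α - 1) * Real.exp (-(α * u)) * |a - u| ^ (-α))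
        ≤ ENNReal.ofReal ((a/2) ^ (α - 1) * Real.exp (-(α * (a/2))) * (2 * a ^ (1-α) / (1-α))) := by
      calc ∫⁻ u in Ioo (a/2) (2*a),
          ENNReal.ofReal (u ^ (α - 1) * Real.exp (-(α * u)) * |a - u| ^ (-α))
          ≤ ∫⁻ u in Ioo (a/2) (2*a),
            ENNReal.ofReal ((a/2) ^ (α - 1) * Real.exp (-(α * (a/2))))
              * ENNReal.ofReal (|a - u| ^ (-α)) := by
            refine setLIntegral_mono' measurableSet_Ioo fun u hu => ?_
            have hu1 : a/2 < u := hu.1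
            have hnnu : 0 ≤ u ^ (α - 1) * Real.exp (-(α * u)) :=
              mul_nonneg (rpow_nonneg (by linarith) _) (Real.exp_pos _).le
            rw [← ENNReal.ofReal_mul (mul_nonneg (rpow_nonneg ha2.le _) (Real.exp_pos _).le)]
            refine ENNReal.ofReal_le_ofReal ?_
            refine mul_le_mul_of_nonneg_right ?_ (rpow_nonneg (abs_nonneg _) _)
            refine mul_le_mul ?_ ?_ (Real.exp_pos _).le (rpow_nonneg ha2.le _)
            · exact rpow_le_rpow_of_nonpos ha2 hu1.le (by linarith)
            · exact Real.exp_le_exp.mpr (by nlinarith)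
        _ = ENNReal.ofReal ((a/2) ^ (α - 1) * Real.exp (-(α * (a/2))))
              * ∫⁻ u in Ioo (a/2) (2*a), ENNReal.ofReal (|a - u| ^ (-α)) :=
            lintegral_const_mul' _ _ ENNReal.ofReal_ne_top
        _ ≤ ENNReal.ofReal ((a/2) ^ (α - 1) * Real.exp (-(α * (a/2))))
              * ENNReal.ofReal (2 * a ^ (1-α) / (1-α)) := by
            gcongr
            exact abs_lem ⟨hα0, hα1⟩ hpos
        _ = ENNReal.ofReal ((a/2) ^ (α - 1) * Real.exp (-(α * (a/2))) * (2 * a ^ (1-α) / (1-α))) := by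
            rw [← ENNReal.ofReal_mul (mul_nonneg (rpow_nonneg ha2.le _) (Real.exp_pos _).le)]
    -- real-number estimates
    have hhalf : (a/2) ^ (-α) = 2 ^ α * a ^ (-α) := by
      rw [div_eq_mul_inv, Real.mul_rpow hpos.le (by norm_num),
        Real.inv_rpow (by norm_num), Real.rpow_neg (by norm_num : (0:ℝ) ≤ 2), inv_inv]
      ring
    have he1 : (a/2) ^ (α - 1) ≤ 2 * a ^ (α - 1) := by
      rw [div_eq_mul_inv, Real.mul_rpow hpos.le (by norm_num)]
      have h2' : (2:ℝ)⁻¹ ^ (α - 1) = 2 ^ (1 - α) := by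
        rw [Real.inv_rpow (by norm_num), ← Real.rpow_neg (by norm_num : (0:ℝ) ≤ 2)]
        ring_nf
      rw [h2']
      have : (2:ℝ) ^ (1 - α) ≤ 2 ^ (1:ℝ) :=
        Real.rpow_le_rpow_of_exponent_le one_le_two (by linarith)
      rw [Real.rpow_one] at this
      nlinarith [rpow_nonneg hpos.le (α - 1)]
    have he2 : Real.exp (-(α * (a/2))) ≤ a ^ (-α) := by
      have hexp : a ≤ Real.exp (a/2) := by
        have he : Real.exp (a/2) = Real.exp (a/4) * Real.exp (a/4) := by
          rw [← Real.exp_add]; ring_nf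
        nlinarith [Real.add_one_le_exp (a/4), Real.exp_pos (a/4), sq_nonneg (1 - a/4)]
      have h1 : a ^ α ≤ Real.exp (a/2 * α) := by
        rw [Real.exp_mul]
        exact Real.rpow_le_rpow hpos.le hexp hα0.le
      rw [Real.rpow_neg hpos.le, show -(α * (a/2)) = -(a/2 * α) by ring, Real.exp_neg]
      exact inv_anti₀ (rpow_pos_of_pos hpos α) h1
    have hT2 : (a/2) ^ (α - 1) * Real.exp (-(α * (a/2))) * (2 * a ^ (1-α) / (1-α))
        ≤ 4 / (1-α) * a ^ (-α) := by
      have e3 : (0:ℝ) ≤ a ^ (α - 1) := rpow_nonneg hpos.le _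
      have e4 : (0:ℝ) ≤ a ^ (-α) := rpow_nonneg hpos.le _
      have e5 : (0:ℝ) ≤ 2 * a ^ (1-α) / (1-α) := by positivity
      calc (a/2) ^ (α - 1) * Real.exp (-(α * (a/2))) * (2 * a ^ (1-α) / (1-α))
          ≤ (2 * a ^ (α - 1)) * a ^ (-α) * (2 * a ^ (1-α) / (1-α)) := by
            refine mul_le_mul ?_ le_rfl e5 (by positivity)
            exact mul_le_mul he1 he2 (Real.exp_pos _).le (by positivity)
        _ = 4 / (1-α) * a ^ (-α) * (a ^ (α - 1) * a ^ (1-α)) := by ring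
        _ = 4 / (1-α) * a ^ (-α) := by
            rw [← Real.rpow_add hpos, show α - 1 + (1-α) = 0 by ring, Real.rpow_zero, mul_one]
    calc ∫⁻ u in Ioi (0:ℝ), ENNReal.ofReal (u ^ (α - 1) * Real.exp (-(α * u)) * |a - u| ^ (-α))
        ≤ ∫⁻ u in Ioc 0 (a/2) ∪ (Ioo (a/2) (2*a) ∪ Ici (2*a)),
            ENNReal.ofReal (u ^ (α - 1) * Real.exp (-(α * u)) * |a - u| ^ (-α)) :=
          lintegral_mono_set hsubset
      _ ≤ (∫⁻ u in Ioc (0:ℝ) (a/2),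
            ENNReal.ofReal (u ^ (α - 1) * Real.exp (-(α * u)) * |a - u| ^ (-α)))
          + ∫⁻ u in Ioo (a/2) (2*a) ∪ Ici (2*a),
            ENNReal.ofReal (u ^ (α - 1) * Real.exp (-(α * u)) * |a - u| ^ (-α)) :=
          lintegral_union_le _ _ _
      _ ≤ (∫⁻ u in Ioc (0:ℝ) (a/2),
            ENNReal.ofReal (u ^ (α - 1) * Real.exp (-(α * u)) * |a - u| ^ (-α)))
          + ((∫⁻ u in Ioo (a/2) (2*a),
            ENNReal.ofReal (u ^ (α - 1) * Real.exp (-(α * u)) * |a - u| ^ (-α)))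
          + ∫⁻ u in Ici (2*a),
            ENNReal.ofReal (u ^ (α - 1) * Real.exp (-(α * u)) * |a - u| ^ (-α))) := by
          gcongr
          exact lintegral_union_le _ _ _
      _ ≤ ENNReal.ofReal (G * (a/2) ^ (-α))
          + (ENNReal.ofReal ((a/2) ^ (α - 1) * Real.exp (-(α * (a/2))) * (2 * a ^ (1-α) / (1-α)))
          + ENNReal.ofReal (G * a ^ (-α))) := by
          gcongr
      _ ≤ ENNReal.ofReal ((2 ^ α * G + G + 4 / (1 - α)) * |a| ^ (-α)) := by
          rw [← ENNReal.ofReal_add (by positivity)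
              (mul_nonneg hG.le (rpow_nonneg hpos.le _)),
            ← ENNReal.ofReal_add (mul_nonneg hG.le (rpow_nonneg (by positivity) _))
              (by positivity)]
          refine ENNReal.ofReal_le_ofReal ?_
          rw [habs, hhalf]
          nlinarith [hT2, rpow_nonneg hpos.le (-α)]

/-- For `α ∈ (0,1)` there is `C > 0` such that for all `a ≠ 0`,
`∫₀¹ s^{α−1} |a + log(1∓s)|^{−α} ds ≤ C|a|^{−α}` (Lebesgue integrals of nonnegative
functions, so the bound in particular asserts finiteness). -/
theorem log_weight_integral_bound (α : ℝ) (hα : α ∈ Set.Ioo (0:ℝ) 1) :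
    ∃ C > (0:ℝ), ∀ a : ℝ, a ≠ 0 →
      (∫⁻ s in Set.Ioo (0:ℝ) 1,
          ENNReal.ofReal (s ^ (α - 1) * |a + Real.log (1 - s)| ^ (-α))
        ≤ ENNReal.ofReal (C * |a| ^ (-α)))
      ∧ (∫⁻ s in Set.Ioo (0:ℝ) 1,
          ENNReal.ofReal (s ^ (α - 1) * |a + Real.log (1 + s)| ^ (-α))
        ≤ ENNReal.ofReal (C * |a| ^ (-α))) := by
  obtain ⟨hα0, hα1⟩ := hα
  obtain ⟨Cm, hCm, hmaster⟩ := master ⟨hα0, hα1⟩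
  refine ⟨4 * Cm, by linarith, fun a ha => ?_⟩
  constructor
  · -- first integral: substitution s = 1 - exp (-u)
    have himg : (fun u : ℝ => 1 - Real.exp (-u)) '' Ioi 0 = Ioo 0 1 := by
      ext s
      constructor
      · rintro ⟨u, hu, rfl⟩
        simp only [mem_Ioi] at hu
        have h1 : Real.exp (-u) < 1 := by
          rw [Real.exp_lt_one_iff]; linarith
        have h2 := Real.exp_pos (-u)
        exact ⟨show (0:ℝ) < 1 - Real.exp (-u) by linarith,
          show (1:ℝ) - Real.exp (-u) < 1 by linarith⟩
      · rintro ⟨h0, h1⟩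
        refine ⟨-Real.log (1 - s), ?_, ?_⟩
        · simp only [mem_Ioi]
          have := Real.log_neg (by linarith) (by linarith : (1:ℝ) - s < 1)
          linarith
        · show 1 - Real.exp (-(-Real.log (1 - s))) = s
          rw [neg_neg, Real.exp_log (by linarith : (0:ℝ) < 1 - s)]; ring
    have hderiv : ∀ x ∈ Ioi (0:ℝ),
        HasDerivWithinAt (fun u : ℝ => 1 - Real.exp (-u)) (Real.exp (-x)) (Ioi 0) x := by
      intro x _
      have h := ((Real.hasDerivAt_exp (-x)).comp x (hasDerivAt_neg x)).const_sub 1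
      simpa using h.hasDerivWithinAt
    have hinj : Set.InjOn (fun u : ℝ => 1 - Real.exp (-u)) (Ioi 0) := by
      intro x _ y _ h
      have : Real.exp (-x) = Real.exp (-y) := by
        simp only at h; linarith
      have := Real.exp_injective this
      linarith [neg_injective this]
    calc ∫⁻ s in Set.Ioo (0:ℝ) 1,
          ENNReal.ofReal (s ^ (α - 1) * |a + Real.log (1 - s)| ^ (-α))
        = ∫⁻ x in Ioi (0:ℝ), ENNReal.ofReal |Real.exp (-x)| *
            ENNReal.ofReal ((1 - Real.exp (-x)) ^ (α - 1)
              * |a + Real.log (1 - (1 - Real.exp (-x)))| ^ (-α)) := by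
          rw [← himg, lintegral_image_1d measurableSet_Ioi hderiv hinj]
      _ ≤ ∫⁻ x in Ioi (0:ℝ),
            ENNReal.ofReal (x ^ (α - 1) * Real.exp (-(α * x)) * |a - x| ^ (-α)) := by
          refine setLIntegral_mono' measurableSet_Ioi fun x hx => ?_
          simp only [mem_Ioi] at hx
          have hex := Real.exp_pos (-x)
          have hlog : Real.log (1 - (1 - Real.exp (-x))) = -x := by
            rw [show (1:ℝ) - (1 - Real.exp (-x)) = Real.exp (-x) by ring, Real.log_exp]
          rw [hlog, abs_of_pos hex, ← ENNReal.ofReal_mul hex.le]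
          refine ENNReal.ofReal_le_ofReal ?_
          rw [show a + -x = a - x by ring]
          have hQ : (0:ℝ) ≤ |a - x| ^ (-α) := rpow_nonneg (abs_nonneg _) _
          have hkey : 0 < x * Real.exp (-x) := by positivity
          have hle : x * Real.exp (-x) ≤ 1 - Real.exp (-x) := by
            have h1 := Real.add_one_le_exp x
            have h2 : Real.exp (-x) * Real.exp x = 1 := by
              rw [← Real.exp_add]; simp
            nlinarith [Real.exp_pos (-x)]
          have hr : (1 - Real.exp (-x)) ^ (α - 1) ≤ (x * Real.exp (-x)) ^ (α - 1) :=
            rpow_le_rpow_of_nonpos hkey hle (by linarith)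
          calc Real.exp (-x) * ((1 - Real.exp (-x)) ^ (α - 1) * |a - x| ^ (-α))
              ≤ Real.exp (-x) * ((x * Real.exp (-x)) ^ (α - 1) * |a - x| ^ (-α)) :=
                mul_le_mul_of_nonneg_left (mul_le_mul_of_nonneg_right hr hQ) hex.le
            _ = x ^ (α - 1) * Real.exp (-(α * x)) * |a - x| ^ (-α) := by
                rw [Real.mul_rpow hx.le hex.le, ← Real.exp_mul,
                  show Real.exp (-x) * (x ^ (α - 1) * Real.exp (-x * (α - 1)) * |a - x| ^ (-α))
                    = x ^ (α - 1) * (Real.exp (-x) * Real.exp (-x * (α - 1))) * |a - x| ^ (-α)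
                    by ring,
                  ← Real.exp_add, show -x + -x * (α - 1) = -(α * x) by ring]
      _ ≤ ENNReal.ofReal (Cm * |a| ^ (-α)) := hmaster a ha
      _ ≤ ENNReal.ofReal (4 * Cm * |a| ^ (-α)) := by
          refine ENNReal.ofReal_le_ofReal ?_
          nlinarith [rpow_nonneg (abs_nonneg a) (-α)]
  · -- second integral: substitution s = exp u - 1
    have himg : (fun u : ℝ => Real.exp u - 1) '' Ioo 0 (Real.log 2) = Ioo 0 1 := by
      ext s
      constructor
      · rintro ⟨u, hu, rfl⟩
        obtain ⟨hu0, hu2⟩ := hu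
        have h1 : 1 < Real.exp u := by
          rw [← Real.exp_zero]; exact Real.exp_lt_exp.mpr hu0
        have h2 : Real.exp u < 2 := by
          rw [← Real.exp_log (by norm_num : (0:ℝ) < 2)]
          exact Real.exp_lt_exp.mpr hu2
        exact ⟨show (0:ℝ) < Real.exp u - 1 by linarith,
          show Real.exp u - 1 < 1 by linarith⟩
      · rintro ⟨h0, h1⟩
        refine ⟨Real.log (1 + s), ⟨?_, ?_⟩, ?_⟩
        · exact Real.log_pos (by linarith)
        · exact Real.log_lt_log_iff (by linarith) (by norm_num) |>.mpr (by linarith)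
        · show Real.exp (Real.log (1 + s)) - 1 = s
          rw [Real.exp_log (by linarith : (0:ℝ) < 1 + s)]; ring
    have hderiv : ∀ x ∈ Ioo (0:ℝ) (Real.log 2),
        HasDerivWithinAt (fun u : ℝ => Real.exp u - 1) (Real.exp x) (Ioo 0 (Real.log 2)) x :=
      fun x _ => ((Real.hasDerivAt_exp x).sub_const 1).hasDerivWithinAt
    have hinj : Set.InjOn (fun u : ℝ => Real.exp u - 1) (Ioo 0 (Real.log 2)) := by
      intro x _ y _ h
      simp only at h
      exact Real.exp_injective (by linarith)
    have hma : -a ≠ 0 := neg_ne_zero.mpr ha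
    calc ∫⁻ s in Set.Ioo (0:ℝ) 1,
          ENNReal.ofReal (s ^ (α - 1) * |a + Real.log (1 + s)| ^ (-α))
        = ∫⁻ x in Ioo (0:ℝ) (Real.log 2), ENNReal.ofReal |Real.exp x| *
            ENNReal.ofReal ((Real.exp x - 1) ^ (α - 1)
              * |a + Real.log (1 + (Real.exp x - 1))| ^ (-α)) := by
          rw [← himg, lintegral_image_1d measurableSet_Ioo hderiv hinj]
      _ ≤ ∫⁻ x in Ioo (0:ℝ) (Real.log 2), ENNReal.ofReal 4 *
            ENNReal.ofReal (x ^ (α - 1) * Real.exp (-(α * x)) * |(-a) - x| ^ (-α)) := by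
          refine setLIntegral_mono' measurableSet_Ioo fun x hx => ?_
          obtain ⟨hx0, hx2⟩ := hx
          have hex := Real.exp_pos x
          have hlog : Real.log (1 + (Real.exp x - 1)) = x := by
            rw [show (1:ℝ) + (Real.exp x - 1) = Real.exp x by ring, Real.log_exp]
          rw [hlog, abs_of_pos hex, ← ENNReal.ofReal_mul hex.le,
            ← ENNReal.ofReal_mul (by norm_num)]
          refine ENNReal.ofReal_le_ofReal ?_
          have habs2 : |(-a) - x| = |a + x| := by
            rw [show (-a) - x = -(a + x) by ring, abs_neg]
          rw [habs2]
          have hQ : (0:ℝ) ≤ |a + x| ^ (-α) := rpow_nonneg (abs_nonneg _) _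
          have hxp : (0:ℝ) ≤ x ^ (α - 1) := rpow_nonneg hx0.le _
          have hexp2 : Real.exp x ≤ 2 := by
            rw [← Real.exp_log (by norm_num : (0:ℝ) < 2)]
            exact Real.exp_le_exp.mpr hx2.le
          have hex1 : x ≤ Real.exp x - 1 := by linarith [Real.add_one_le_exp x]
          have h1 : (Real.exp x - 1) ^ (α - 1) ≤ x ^ (α - 1) :=
            rpow_le_rpow_of_nonpos hx0 hex1 (by linarith)
          have hexpa : Real.exp (α * x) ≤ 2 :=
            le_trans (Real.exp_le_exp.mpr (by nlinarith)) hexp2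
          have h2 : (1:ℝ) ≤ 2 * Real.exp (-(α * x)) := by
            have hh : Real.exp (α * x) * Real.exp (-(α * x)) = 1 := by
              rw [← Real.exp_add]; simp
            nlinarith [Real.exp_pos (-(α * x))]
          have hnn1 : (0:ℝ) ≤ (Real.exp x - 1) ^ (α - 1) := rpow_nonneg (by linarith) _
          calc Real.exp x * ((Real.exp x - 1) ^ (α - 1) * |a + x| ^ (-α))
              ≤ 2 * (x ^ (α - 1) * |a + x| ^ (-α)) :=
                mul_le_mul hexp2 (mul_le_mul_of_nonneg_right h1 hQ)
                  (mul_nonneg hnn1 hQ) (by norm_num)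
            _ = x ^ (α - 1) * |a + x| ^ (-α) * 2 * 1 := by ring
            _ ≤ x ^ (α - 1) * |a + x| ^ (-α) * 2 * (2 * Real.exp (-(α * x))) := by
                refine mul_le_mul_of_nonneg_left h2 (by positivity)
            _ = 4 * (x ^ (α - 1) * Real.exp (-(α * x)) * |a + x| ^ (-α)) := by ring
      _ = ENNReal.ofReal 4 * ∫⁻ x in Ioo (0:ℝ) (Real.log 2),
            ENNReal.ofReal (x ^ (α - 1) * Real.exp (-(α * x)) * |(-a) - x| ^ (-α)) :=
          lintegral_const_mul' _ _ ENNReal.ofReal_ne_top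
      _ ≤ ENNReal.ofReal 4 * ∫⁻ x in Ioi (0:ℝ),
            ENNReal.ofReal (x ^ (α - 1) * Real.exp (-(α * x)) * |(-a) - x| ^ (-α)) := by
          gcongr
          exact (fun x hx => hx.1)
      _ ≤ ENNReal.ofReal 4 * ENNReal.ofReal (Cm * |(-a)| ^ (-α)) := by
          gcongr
          exact hmaster (-a) hma
      _ = ENNReal.ofReal (4 * Cm * |a| ^ (-α)) := by
          rw [← ENNReal.ofReal_mul (by norm_num), abs_neg, mul_assoc]
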